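/- Let $P$ be a polynomial in $m+1$ variables over $\mathbb{C}$, let $f_0,\dots,f_m \in \mathbb{C}[t]$ be one-variable polynomials, let $t_0 \in \mathbb{C}$, and set $a = (f_0(t_0),\dots,f_m(t_0)) \in \mathbb{C}^{m+1}$. If $P$ vanishes with multiplicity at least $\mu$ at the point $a$, then $(t - t_0)^{\mu}$ divides the one-variable polynomial $P(f_0(t),\dots,f_m(t))$. -/

import Mathlib

/-- A polynomial `P ∈ ℂ[x_0, …, x_m]` vanishes with multiplicity at least `y` at a
point `p ∈ ℂ^(m+1)` if every iterated partial derivative of `P` of total order at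
most `y - 1` (equivalently, of total order `< y`) evaluates to `0` at `p`. -/
def VanishesToOrder {σ : Type*} (Q : MvPolynomial σ ℂ) (p : σ → ℂ) (y : ℕ) : Prop :=
  ∀ L : List σ, L.length < y →
    MvPolynomial.eval p (L.foldr (fun i q => MvPolynomial.pderiv i q) Q) = 0

/-- Chain rule: the derivative of `P(f₀(t), …, fₘ(t))`. -/
theorem deriv_aeval_mv {σ : Type*} [Fintype σ] (f : σ → Polynomial ℂ) (P : MvPolynomial σ ℂ) :
    Polynomial.derivative (MvPolynomial.aeval f P) =
      ∑ i, MvPolynomial.aeval f (MvPolynomial.pderiv i P) * Polynomial.derivative (f i) := by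
  induction P using MvPolynomial.induction_on with
  | C c => simp
  | add p q hp hq => simp [map_add, hp, hq, Finset.sum_add_distrib, add_mul]
  | mul_X p i hp =>
      simp only [map_mul, MvPolynomial.aeval_X, Polynomial.derivative_mul, hp,
        MvPolynomial.pderiv_mul, MvPolynomial.pderiv_X, map_add, add_mul,
        Finset.sum_add_distrib, Finset.sum_mul]
      refine congrArg₂ (· + ·) ?_ ?_
      · exact Finset.sum_congr rfl fun j _ => by ring
      · rw [Finset.sum_eq_single i] <;> simp +contextual [Pi.single_apply, eq_comm]

theorem eval_aeval_mv {σ : Type*} (f : σ → Polynomial ℂ) (t0 : ℂ) (P : MvPolynomial σ ℂ) :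
    Polynomial.eval t0 (MvPolynomial.aeval f P) =
      MvPolynomial.eval (fun i => (f i).eval t0) P := by
  induction P using MvPolynomial.induction_on with
  | C c => simp
  | add p q hp hq => simp [hp, hq]
  | mul_X p i hp => simp [hp]

theorem key_vanish {σ : Type*} [Fintype σ] (μ : ℕ) : ∀ (P : MvPolynomial σ ℂ)
    (f : σ → Polynomial ℂ) (t0 : ℂ),
    VanishesToOrder P (fun i => (f i).eval t0) μ →
    (Polynomial.X - Polynomial.C t0) ^ μ ∣ MvPolynomial.aeval f P := by
  induction μ with
  | zero => intro P f t0 _; simp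
  | succ μ ih =>
      intro P f t0 hv
      set g : Polynomial ℂ := MvPolynomial.aeval f P with hg
      by_cases hg0 : g = 0
      · rw [hg0]; exact dvd_zero _
      have hroot : g.IsRoot t0 := by
        have := hv [] (Nat.succ_pos μ)
        rw [Polynomial.IsRoot, hg, eval_aeval_mv]; simpa using this
      have hder : (Polynomial.X - Polynomial.C t0) ^ μ ∣ Polynomial.derivative g := by
        rw [hg, deriv_aeval_mv]
        refine Finset.dvd_sum fun i _ => Dvd.dvd.mul_right ?_ _
        refine ih (MvPolynomial.pderiv i P) f t0 fun L hL => ?_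
        have h2 := hv (L ++ [i]) (by simpa using Nat.succ_lt_succ hL)
        simpa [List.foldr_append] using h2
      have hd0 : Polynomial.derivative g ≠ 0 := by
        intro h
        have := Polynomial.eq_C_of_derivative_eq_zero h
        rw [this] at hroot hg0
        simp [Polynomial.IsRoot] at hroot
        simp [hroot] at hg0
      have h1 : μ ≤ (Polynomial.derivative g).rootMultiplicity t0 :=
        (Polynomial.le_rootMultiplicity_iff hd0).mpr hder
      have h2 := Polynomial.derivative_rootMultiplicity_of_root (p := g) (t := t0) hroot
      have h3 : 1 ≤ g.rootMultiplicity t0 :=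
        (Polynomial.rootMultiplicity_pos hg0).mpr hroot
      have : μ + 1 ≤ g.rootMultiplicity t0 := by omega
      exact (Polynomial.le_rootMultiplicity_iff hg0).mp this

/-- Let `P` be a polynomial in `m + 1` variables over `ℂ`, let `f_0, …, f_m ∈ ℂ[t]`,
let `t_0 ∈ ℂ`, and set `a = (f_0(t_0), …, f_m(t_0))`.  If `P` vanishes with
multiplicity at least `μ` at `a`, then `(t - t_0)^μ` divides the one-variable
polynomial `P(f_0(t), …, f_m(t))`. -/
theorem stmt9 (m : ℕ) (P : MvPolynomial (Fin (m + 1)) ℂ)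
    (f : Fin (m + 1) → Polynomial ℂ) (t0 : ℂ) (μ : ℕ)
    (hv : VanishesToOrder P (fun i => (f i).eval t0) μ) :
    (Polynomial.X - Polynomial.C t0) ^ μ ∣ MvPolynomial.aeval f P :=
  key_vanish μ P f t0 hv
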